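/- Every ideal I of F_q[x_1,…,x_n] that contains x_i^q − x_i for all i = 1, …, n is a radical ideal. Equivalently, every ideal of the quotient ring R_q = F_q[x_1,…,x_n]/(x_1^q − x_1, …, x_n^q − x_n) is radical. -/

import Mathlib

open MvPolynomial

/-- Every ideal of `F_q[x_1,…,x_n]` containing `x_i^q − x_i` for all `i`
is a radical ideal. -/
theorem stmt_2 {F : Type*} [Field F] [Fintype F] {n : ℕ}
    (I : Ideal (MvPolynomial (Fin n) F))
    (hI : ∀ i : Fin n, X i ^ Fintype.card F - X i ∈ I) :
    I.IsRadical := by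
  set q := Fintype.card F with hq
  obtain ⟨p, hpc⟩ := CharP.exists F
  have hp : p.Prime := CharP.char_is_prime F p
  haveI : CharP (MvPolynomial (Fin n) F) p := inferInstance
  haveI : Fact p.Prime := ⟨hp⟩
  obtain ⟨k, hk⟩ := FiniteField.card F p
  -- key claim: f^q - f ∈ I for all f
  have key : ∀ f : MvPolynomial (Fin n) F, f ^ q - f ∈ I := by
    intro f
    induction f using MvPolynomial.induction_on with
    | C a =>
        have : (C a : MvPolynomial (Fin n) F) ^ q = C a := by
          rw [← map_pow, FiniteField.pow_card]
        rw [this, sub_self]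
        exact I.zero_mem
    | add f g hf hg =>
        have : (f + g) ^ q = f ^ q + g ^ q := by
          rw [hq, hk.2, add_pow_char_pow]
        rw [this]
        have : f ^ q + g ^ q - (f + g) = (f ^ q - f) + (g ^ q - g) := by ring
        rw [this]
        exact I.add_mem hf hg
    | mul_X f i hf =>
        have : (f * X i) ^ q - f * X i
            = f ^ q * (X i ^ q - X i) + X i * (f ^ q - f) := by ring
        rw [this]
        exact I.add_mem (I.mul_mem_left _ (hI i)) (I.mul_mem_left _ hf)
  -- iterate: f^(q^j) - f ∈ I
  have iter : ∀ (j : ℕ) (f : MvPolynomial (Fin n) F), f ^ q ^ j - f ∈ I := by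
    intro j
    induction j with
    | zero => intro f; simp
    | succ j ih =>
        intro f
        have h1 : (f ^ q ^ j) ^ q - f ^ q ^ j ∈ I := key _
        have h2 : f ^ q ^ j - f ∈ I := ih f
        have : f ^ q ^ (j + 1) - f = ((f ^ q ^ j) ^ q - f ^ q ^ j) + (f ^ q ^ j - f) := by
          rw [pow_succ, pow_mul]; ring
        rw [this]
        exact I.add_mem h1 h2
  intro f hf
  obtain ⟨m, hm⟩ := hf
  have hq2 : 2 ≤ q := Fintype.one_lt_card
  have hmq : m ≤ q ^ m :=
    le_trans (Nat.lt_two_pow_self (n := m)).le (Nat.pow_le_pow_left hq2 m)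
  have hpow : f ^ q ^ m ∈ I := by
    have : f ^ q ^ m = f ^ m * f ^ (q ^ m - m) := by
      rw [← pow_add, Nat.add_sub_cancel' hmq]
    rw [this]
    exact I.mul_mem_right _ hm
  have := I.sub_mem hpow (iter m f)
  simpa using this
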